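/- Let $r,t \ge 2$ be integers and let $G$ be an $r$-graph on $[n]$ containing no $t$ pairwise disjoint edges. Then for any pair of vertices $i,j$, the compressed hypergraph $\pi_{ij}(G)$ also contains no $t$ pairwise disjoint edges. -/

import Mathlib

open Finset

/-- Lagrangian polynomial: sum over edges of products of weights. -/
def lagPoly (G : Finset (Finset ℕ)) (x : ℕ → ℝ) : ℝ := ∑ e ∈ G, ∏ i ∈ e, x i

/-- A feasible weight vector on `[n] = {1,…,n}`. -/
def IsFeasible (n : ℕ) (x : ℕ → ℝ) : Prop :=
  (∀ i, 0 ≤ x i) ∧ ∑ i ∈ Finset.Icc 1 n, x i = 1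

/-- Lagrangian of a hypergraph on `[n]`. -/
noncomputable def lag (n : ℕ) (G : Finset (Finset ℕ)) : ℝ :=
  sSup {v : ℝ | ∃ x : ℕ → ℝ, IsFeasible n x ∧ lagPoly G x = v}

/-- `G` is an `r`-graph on the vertex set `{1,…,n}`. -/
def IsGraphOn (n r : ℕ) (G : Finset (Finset ℕ)) : Prop :=
  ∀ e ∈ G, e ⊆ Finset.Icc 1 n ∧ e.card = r

/-- The compression `π_{ij}(G)`: each edge `f ∪ {j}` with `f` avoiding `i,j` and
`f ∪ {i} ∉ G` is replaced by `f ∪ {i}`. -/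
def compress (G : Finset (Finset ℕ)) (i j : ℕ) : Finset (Finset ℕ) :=
  (G.filter fun e => ¬(j ∈ e ∧ i ∉ e ∧ insert i (e.erase j) ∉ G)) ∪
  ((G.filter fun e => j ∈ e ∧ i ∉ e ∧ insert i (e.erase j) ∉ G).image
    fun e => insert i (e.erase j))

/-- `G` contains `t` pairwise disjoint edges. -/
def HasMatching (G : Finset (Finset ℕ)) (t : ℕ) : Prop :=
  ∃ M : Finset (Finset ℕ), M ⊆ G ∧ M.card = t ∧
    (M : Set (Finset ℕ)).Pairwise fun e f => Disjoint e f

/-- `G` contains a complete `r`-graph on `p` vertices. -/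
def HasClique (G : Finset (Finset ℕ)) (p r : ℕ) : Prop :=
  ∃ S : Finset ℕ, S.card = p ∧ ∀ e ⊆ S, e.card = r → e ∈ G

theorem compression_preserves_matching_free (n r t : ℕ) (hr : 2 ≤ r) (ht : 2 ≤ t)
    (G : Finset (Finset ℕ)) (hG : IsGraphOn n r G)
    (hM : ¬HasMatching G t) (i j : ℕ) :
    ¬HasMatching (compress G i j) t := by
  rintro ⟨M, hMsub, hMcard, hMdisj⟩
  apply hM
  by_cases hall : ∀ h ∈ M, h ∈ G
  · exact ⟨M, fun h hh => hall h hh, hMcard, hMdisj⟩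
  push_neg at hall
  obtain ⟨e₁, he₁M, he₁G⟩ := hall
  have hc := hMsub he₁M
  rw [compress, mem_union] at hc
  rcases hc with hc | hc
  · exact absurd (mem_filter.1 hc).1 he₁G
  obtain ⟨e, heG', he₁⟩ := mem_image.1 hc
  rw [mem_filter] at heG'
  obtain ⟨heG, hje, hie, -⟩ := heG'
  have hij : i ≠ j := fun h => hie (h ▸ hje)
  have hi₁ : i ∈ e₁ := he₁ ▸ mem_insert_self _ _
  have hj₁ : j ∉ e₁ := by
    rw [← he₁, mem_insert, Finset.mem_erase]
    push_neg
    exact ⟨hij.symm, fun h => absurd rfl h⟩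
  have hiej : i ∉ e.erase j := fun h => hie (mem_of_mem_erase h)
  have hee : insert j (e.erase j) = e := insert_erase hje
  have hsub₁ : e.erase j ⊆ e₁ := by rw [← he₁]; exact subset_insert _ _
  -- every other edge of M is in G and avoids i
  have hother : ∀ h ∈ M, h ≠ e₁ → i ∉ h ∧ h ∈ G := by
    intro h hhM hne
    have hd : Disjoint e₁ h := hMdisj (mem_coe.2 he₁M) (mem_coe.2 hhM) (Ne.symm hne)
    have hih : i ∉ h := fun hih => (disjoint_left.1 hd hi₁) hih
    refine ⟨hih, ?_⟩
    have hc2 := hMsub hhM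
    rw [compress, mem_union] at hc2
    rcases hc2 with hc2 | hc2
    · exact (mem_filter.1 hc2).1
    · obtain ⟨f, -, hf⟩ := mem_image.1 hc2
      exact absurd (hf ▸ mem_insert_self i _) hih
  -- helper: disjointness of e with other edges avoiding j
  have hdisj_e : ∀ h : Finset ℕ, Disjoint e₁ h → j ∉ h → Disjoint e h := by
    intro h hd hjh
    rw [← hee, disjoint_insert_left]
    exact ⟨hjh, disjoint_of_subset_left hsub₁ hd⟩
  by_cases hjcase : ∃ g ∈ M, g ≠ e₁ ∧ j ∈ g
  · -- Case B: j belongs to another edge g; replace e₁ by e and g by g'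
    obtain ⟨g, hgM, hge₁, hjg⟩ := hjcase
    obtain ⟨hig, hgG⟩ := hother g hgM hge₁
    have hg'G : insert i (g.erase j) ∈ G := by
      have hc2 := hMsub hgM
      rw [compress, mem_union] at hc2
      rcases hc2 with hc2 | hc2
      · have h2 := (mem_filter.1 hc2).2
        push_neg at h2
        exact h2 hjg hig
      · obtain ⟨f, -, hf⟩ := mem_image.1 hc2
        exact absurd (hf ▸ mem_insert_self i _) hig
    set g' : Finset ℕ := insert i (g.erase j) with hg'
    have hjg' : j ∉ g' := by
      rw [hg', mem_insert, Finset.mem_erase]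
      push_neg
      exact ⟨hij.symm, fun h => absurd rfl h⟩
    have hig' : i ∈ g' := mem_insert_self _ _
    have hmem_eg : g ∈ M.erase e₁ := mem_erase.2 ⟨hge₁, hgM⟩
    set M₀ : Finset (Finset ℕ) := (M.erase e₁).erase g with hM₀
    have hM₀mem : ∀ h ∈ M₀, h ∈ M ∧ h ≠ e₁ ∧ h ≠ g := by
      intro h hh
      have h1 := mem_erase.1 hh
      have h2 := mem_erase.1 h1.2
      exact ⟨h2.2, h2.1, h1.1⟩
    have hjh : ∀ h ∈ M₀, j ∉ h := by
      intro h hh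
      obtain ⟨hhM, -, hhg⟩ := hM₀mem h hh
      have hd : Disjoint g h := hMdisj (mem_coe.2 hgM) (mem_coe.2 hhM) (Ne.symm hhg)
      exact fun hcon => disjoint_left.1 hd hjg hcon
    have hde₁g : Disjoint e₁ g := hMdisj (mem_coe.2 he₁M) (mem_coe.2 hgM) hge₁.symm
    have hdeg' : Disjoint e g' := by
      rw [← hee, disjoint_insert_left, hg', disjoint_insert_right]
      refine ⟨hjg', hiej, ?_⟩
      exact disjoint_of_subset_left hsub₁ (disjoint_of_subset_right (erase_subset _ _) hde₁g)
    have hdisj_g' : ∀ h ∈ M₀, Disjoint g' h := by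
      intro h hh
      obtain ⟨hhM, hhe₁, hhg⟩ := hM₀mem h hh
      have hd : Disjoint g h := hMdisj (mem_coe.2 hgM) (mem_coe.2 hhM) (Ne.symm hhg)
      rw [hg', disjoint_insert_left]
      exact ⟨(hother h hhM hhe₁).1, disjoint_of_subset_left (erase_subset _ _) hd⟩
    have hdisj_eh : ∀ h ∈ M₀, Disjoint e h := by
      intro h hh
      obtain ⟨hhM, hhe₁, -⟩ := hM₀mem h hh
      exact hdisj_e h (hMdisj (mem_coe.2 he₁M) (mem_coe.2 hhM) (Ne.symm hhe₁)) (hjh h hh)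
    have hg'M₀ : g' ∉ M₀ := fun hcon => (hother g' (hM₀mem g' hcon).1 (hM₀mem g' hcon).2.1).1 hig'
    have heg' : e ≠ g' := fun hcon => hjg' (hcon ▸ hje)
    have heM₀ : e ∉ insert g' M₀ := by
      rw [mem_insert]
      rintro (rfl | hcon)
      · exact heg' rfl
      · exact hjh e hcon hje
    refine ⟨insert e (insert g' M₀), ?_, ?_, ?_⟩
    · intro h hh
      rcases mem_insert.1 hh with rfl | hh
      · exact heG
      rcases mem_insert.1 hh with rfl | hh
      · exact hg'G
      · exact (hother h (hM₀mem h hh).1 (hM₀mem h hh).2.1).2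
    · rw [card_insert_of_notMem heM₀, card_insert_of_notMem hg'M₀, hM₀,
        card_erase_of_mem hmem_eg, card_erase_of_mem he₁M, hMcard]
      omega
    · have hsym : Symmetric fun (a b : Finset ℕ) => Disjoint a b := fun _ _ h => h.symm
      rw [coe_insert, @Set.pairwise_insert_of_symmetric _ _ _ _ ⟨fun _ _ h => hsym h⟩, coe_insert,
        @Set.pairwise_insert_of_symmetric _ _ _ _ ⟨fun _ _ h => hsym h⟩]
      refine ⟨⟨?_, ?_⟩, ?_⟩
      · refine Set.Pairwise.mono ?_ hMdisj
        intro a ha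
        exact mem_coe.2 (hM₀mem a (mem_coe.1 ha)).1
      · intro b hb _
        exact hdisj_g' b (mem_coe.1 hb)
      · intro b hb _
        rcases Set.mem_insert_iff.1 hb with rfl | hb'
        · exact hdeg'
        · exact hdisj_eh b (mem_coe.1 hb')
  · push_neg at hjcase
    -- Case A: j belongs to no other edge; replace e₁ by e
    have heM : e ∉ M.erase e₁ := fun hcon =>
      hjcase e (mem_of_mem_erase hcon) (ne_of_mem_erase hcon) hje
    refine ⟨insert e (M.erase e₁), ?_, ?_, ?_⟩
    · intro h hh
      rcases mem_insert.1 hh with rfl | hh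
      · exact heG
      · exact (hother h (mem_of_mem_erase hh) (ne_of_mem_erase hh)).2
    · rw [card_insert_of_notMem heM, card_erase_of_mem he₁M, hMcard]
      omega
    · have hsym : Symmetric fun (a b : Finset ℕ) => Disjoint a b := fun _ _ h => h.symm
      rw [coe_insert, @Set.pairwise_insert_of_symmetric _ _ _ _ ⟨fun _ _ h => hsym h⟩]
      refine ⟨?_, ?_⟩
      · refine Set.Pairwise.mono ?_ hMdisj
        intro a ha
        exact mem_coe.2 (mem_of_mem_erase (mem_coe.1 ha))
      · intro b hb _
        have hbM := mem_of_mem_erase (mem_coe.1 hb)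
        have hbe₁ := ne_of_mem_erase (mem_coe.1 hb)
        exact hdisj_e b (hMdisj (mem_coe.2 he₁M) (mem_coe.2 hbM) (Ne.symm hbe₁))
          (hjcase b hbM hbe₁)
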